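/- Let D ⊂ R^d be a bounded domain and ρ ∈ L^∞(D) nonnegative. There exists C depending only on D such that for all 0 ≤ ε' ≤ ε, sup_{x∈D} |(F_ε * ρ)(x) − (F_{ε'} * ρ)(x)| ≤ C ε ‖ρ‖_{L^∞(D)}. -/

import Mathlib

open Real MeasureTheory Metric
open scoped ENNReal NNReal

/-- Comparison of two regularizations of the Newtonian force convolved with a bounded
density: there is a constant `C` depending only on `D` such that for all
`0 ≤ ε' ≤ ε`, `sup_{x ∈ D} |(F_ε * ρ)(x) − (F_{ε'} * ρ)(x)| ≤ C ε ‖ρ‖_∞`. -/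
lemma aux_key_lintegral (d : ℕ) (hd : 1 ≤ d) (ε : ℝ) (hε : 0 ≤ ε) :
    ∫⁻ y in Metric.ball (0 : EuclideanSpace ℝ (Fin d)) ε,
        ENNReal.ofReal (1 / ‖y‖ ^ (d - 1)) ≤
      ENNReal.ofReal ε * 2 ^ d * volume (Metric.ball (0 : EuclideanSpace ℝ (Fin d)) 1) := by
  obtain ⟨m, rfl⟩ : ∃ m, d = m + 1 := ⟨d - 1, (Nat.succ_pred_eq_of_pos hd).symm⟩
  simp only [Nat.add_sub_cancel]
  set E := EuclideanSpace ℝ (Fin (m + 1)) with hE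
  rcases eq_or_lt_of_le hε with h0 | hε
  · simp [← h0]
  have hnt : Nontrivial E := inferInstance
  set V := volume (Metric.ball (0 : E) 1) with hV
  set f : E → ℝ≥0∞ := fun y => ENNReal.ofReal (1 / ‖y‖ ^ m) with hf
  set A : ℕ → Set E := fun k => {y | ε / 2 ^ (k + 1) ≤ ‖y‖} ∩ Metric.ball 0 (ε / 2 ^ k) with hA
  have hcover : Metric.ball (0 : E) ε \ {0} ⊆ ⋃ k, A k := by
    intro y hy
    have hy0 : 0 < ‖y‖ := by exact norm_pos_iff.mpr hy.2
    have hyε : ‖y‖ < ε := by simpa [Metric.mem_ball] using hy.1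
    have hex : ∃ n : ℕ, ε / 2 ^ n ≤ ‖y‖ := by
      obtain ⟨n, hn⟩ := exists_pow_lt_of_lt_one (div_pos hy0 hε) (by norm_num : (1:ℝ)/2 < 1)
      refine ⟨n, le_of_lt ?_⟩
      have h1 : ε / 2 ^ n = ε * ((1:ℝ)/2) ^ n := by rw [div_pow]; ring
      rw [h1]
      calc ε * ((1:ℝ)/2) ^ n < ε * (‖y‖ / ε) := mul_lt_mul_of_pos_left hn hε
      _ = ‖y‖ := by field_simp
    classical
    have hn := Nat.find_spec hex
    set n := Nat.find hex with hn_def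
    have hn1 : n ≠ 0 := by
      intro h
      rw [h] at hn
      simp only [pow_zero, div_one] at hn
      exact absurd hn (not_le.2 hyε)
    obtain ⟨k, hk⟩ := Nat.exists_eq_succ_of_ne_zero hn1
    refine Set.mem_iUnion.2 ⟨k, ?_, ?_⟩
    · show ε / 2 ^ (k + 1) ≤ ‖y‖
      simpa [hk, Nat.succ_eq_add_one] using hn
    · have := Nat.find_min hex (m := k) (by omega)
      simpa [Metric.mem_ball, dist_eq_norm] using not_le.1 this
  have hnull : (volume : Measure E) {(0:E)} = 0 := measure_singleton _
  have step1 : ∫⁻ y in Metric.ball (0 : E) ε, f y ∂volume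
      = ∫⁻ y in Metric.ball (0 : E) ε \ {0}, f y ∂volume := by
    refine (setLIntegral_congr ?_).symm
    exact (diff_null_ae_eq_self hnull)
  have step2 : ∫⁻ y in Metric.ball (0 : E) ε \ {0}, f y ∂volume ≤ ∑' k, ∫⁻ y in A k, f y ∂volume :=
    le_trans (lintegral_mono_set hcover) (lintegral_iUnion_le _ _)
  have hterm : ∀ k : ℕ, ∫⁻ y in A k, f y ∂volume ≤
      ENNReal.ofReal (ε * 2 ^ m * ((1:ℝ)/2) ^ k) * V := by
    intro k
    have hbound : ∀ y ∈ A k, f y ≤ ENNReal.ofReal (1 / (ε / 2 ^ (k+1)) ^ m) := by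
      intro y hy
      apply ENNReal.ofReal_le_ofReal
      apply one_div_le_one_div_of_le (by positivity)
      exact pow_le_pow_left₀ (by positivity) hy.1 m
    calc ∫⁻ y in A k, f y ∂volume
        ≤ ∫⁻ _ in A k, ENNReal.ofReal (1 / (ε / 2 ^ (k+1)) ^ m) ∂volume := by
          refine setLIntegral_mono' ?_ hbound
          exact (measurableSet_le measurable_const measurable_norm).inter measurableSet_ball
      _ = ENNReal.ofReal (1 / (ε / 2 ^ (k+1)) ^ m) * volume (A k) := setLIntegral_const _ _
      _ ≤ ENNReal.ofReal (1 / (ε / 2 ^ (k+1)) ^ m) * volume (Metric.ball (0:E) (ε / 2 ^ k)) := by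
          gcongr
          exact Set.inter_subset_right
      _ = ENNReal.ofReal (1 / (ε / 2 ^ (k+1)) ^ m) * (ENNReal.ofReal ((ε / 2 ^ k) ^ (m+1)) * V) := by
          rw [Measure.addHaar_ball _ _ (by positivity)]
          congr 2
          rw [finrank_euclideanSpace_fin]
      _ = ENNReal.ofReal (ε * 2 ^ m * ((1:ℝ)/2) ^ k) * V := by
          rw [← mul_assoc, ← ENNReal.ofReal_mul (by positivity)]
          congr 2
          field_simp
          simp only [div_pow, one_div, inv_pow, ← pow_mul]
          field_simp
          ring
  have hsum : ∑' k, ∫⁻ y in A k, f y ∂volume ≤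
      ENNReal.ofReal (ε * 2 ^ m) * 2 * V := by
    calc ∑' k, ∫⁻ y in A k, f y ∂volume
        ≤ ∑' k : ℕ, ENNReal.ofReal (ε * 2 ^ m * ((1:ℝ)/2) ^ k) * V := ENNReal.tsum_le_tsum hterm
      _ = (∑' k : ℕ, ENNReal.ofReal (ε * 2 ^ m) * (ENNReal.ofReal ((1:ℝ)/2)) ^ k) * V := by
          rw [ENNReal.tsum_mul_right]
          congr 1
          refine tsum_congr fun k => ?_
          rw [← ENNReal.ofReal_pow (by norm_num), ← ENNReal.ofReal_mul (by positivity)]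
      _ = ENNReal.ofReal (ε * 2 ^ m) * (1 - ENNReal.ofReal ((1:ℝ)/2))⁻¹ * V := by
          rw [ENNReal.tsum_mul_left, ENNReal.tsum_geometric]
      _ = ENNReal.ofReal (ε * 2 ^ m) * 2 * V := by
          congr 2
          have : ENNReal.ofReal ((1:ℝ)/2) = 2⁻¹ := by
            rw [ENNReal.ofReal_div_of_pos (by norm_num)]
            simp
          rw [this, ENNReal.one_sub_inv_two]
          simp
  calc ∫⁻ y in Metric.ball (0 : E) ε, f y ∂volume ≤ ENNReal.ofReal (ε * 2 ^ m) * 2 * V := by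
        rw [step1]; exact le_trans step2 hsum
    _ = ENNReal.ofReal ε * 2 ^ (m+1) * V := by
        rw [ENNReal.ofReal_mul hε.le, ENNReal.ofReal_pow (by norm_num)]
        have : ENNReal.ofReal (2:ℝ) = 2 := by simp
        rw [this, mul_assoc, mul_assoc, pow_succ]
        ring_nf

lemma aux_shifted (d : ℕ) (hd : 1 ≤ d) (x : EuclideanSpace ℝ (Fin d)) (r : ℝ) (hr : 0 ≤ r)
    (s : Set (EuclideanSpace ℝ (Fin d))) (hs : s ⊆ Metric.ball x r) :
    ∫⁻ y in s, ENNReal.ofReal (1 / ‖x - y‖ ^ (d - 1)) ≤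
      ENNReal.ofReal r * 2 ^ d * volume (Metric.ball (0 : EuclideanSpace ℝ (Fin d)) 1) := by
  have hmp : MeasurePreserving (fun y : EuclideanSpace ℝ (Fin d) => x - y) volume volume :=
    Measure.measurePreserving_sub_left volume x
  have hpre : (fun y : EuclideanSpace ℝ (Fin d) => x - y) ⁻¹' (Metric.ball 0 r) = Metric.ball x r := by
    ext y
    simp [Metric.mem_ball, dist_eq_norm, norm_sub_rev x y]
  calc ∫⁻ y in s, ENNReal.ofReal (1 / ‖x - y‖ ^ (d - 1))
      ≤ ∫⁻ y in Metric.ball x r, ENNReal.ofReal (1 / ‖x - y‖ ^ (d - 1)) :=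
        lintegral_mono_set hs
    _ = ∫⁻ z in Metric.ball (0 : EuclideanSpace ℝ (Fin d)) r, ENNReal.ofReal (1 / ‖z‖ ^ (d - 1)) := by
        rw [← hpre]
        exact hmp.setLIntegral_comp_preimage measurableSet_ball
          (((measurable_norm.pow_const _).const_div 1).ennreal_ofReal)
    _ ≤ _ := aux_key_lintegral d hd r hr

lemma aux_integrableOn (d : ℕ) (hd : 1 ≤ d) (Cstar : ℝ) (hC : 0 ≤ Cstar)
    (G : EuclideanSpace ℝ (Fin d) → EuclideanSpace ℝ (Fin d)) (hG : Measurable G)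
    (hGb : ∀ z, z ≠ 0 → ‖G z‖ ≤ Cstar / ‖z‖ ^ (d - 1))
    (D : Set (EuclideanSpace ℝ (Fin d))) (hDm : MeasurableSet D)
    (x : EuclideanSpace ℝ (Fin d)) (R : ℝ) (hR : 0 ≤ R) (hDR : D ⊆ Metric.ball x R)
    (ρ : EuclideanSpace ℝ (Fin d) → ℝ) (hρm : Measurable ρ) (hρ0 : ∀ y, 0 ≤ ρ y)
    (M : ℝ) (hM : 0 ≤ M) (hρM : ∀ y ∈ D, ρ y ≤ M) :
    IntegrableOn (fun y => ρ y • G (x - y)) D volume := by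
  haveI : Nonempty (Fin d) := ⟨⟨0, hd⟩⟩
  constructor
  · exact (hρm.smul (hG.comp (measurable_const.sub measurable_id))).aestronglyMeasurable
  · rw [hasFiniteIntegral_iff_norm]
    have h1 : ∀ᵐ y ∂(volume.restrict D), y ∈ D := ae_restrict_mem hDm
    have h2 : ∀ᵐ y ∂(volume.restrict D), y ≠ x := by
      refine ae_restrict_of_ae ?_
      rw [ae_iff]
      simp only [ne_eq, not_not, Set.setOf_eq_eq_singleton]
      exact measure_singleton x
    have hmono : ∫⁻ y in D, ENNReal.ofReal ‖ρ y • G (x - y)‖ ≤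
        ∫⁻ y in D, ENNReal.ofReal (M * Cstar * (1 / ‖x - y‖ ^ (d - 1))) := by
      refine lintegral_mono_ae ?_
      filter_upwards [h1, h2] with y hy1 hy2
      apply ENNReal.ofReal_le_ofReal
      rw [norm_smul, Real.norm_eq_abs, abs_of_nonneg (hρ0 y)]
      have hxy : x - y ≠ 0 := sub_ne_zero.mpr (Ne.symm hy2)
      have h3 : ‖G (x - y)‖ ≤ Cstar / ‖x - y‖ ^ (d - 1) := hGb _ hxy
      have h4 : M * Cstar * (1 / ‖x - y‖ ^ (d - 1)) = M * (Cstar / ‖x - y‖ ^ (d - 1)) := by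
        ring
      rw [h4]
      exact mul_le_mul (hρM y hy1) h3 (norm_nonneg _) hM
    refine lt_of_le_of_lt hmono ?_
    have heq : ∫⁻ y in D, ENNReal.ofReal (M * Cstar * (1 / ‖x - y‖ ^ (d - 1))) =
        ENNReal.ofReal (M * Cstar) * ∫⁻ y in D, ENNReal.ofReal (1 / ‖x - y‖ ^ (d - 1)) := by
      rw [← lintegral_const_mul' _ _ ENNReal.ofReal_ne_top]
      refine lintegral_congr fun y => ?_
      rw [← ENNReal.ofReal_mul (by positivity)]
    rw [heq]
    refine ENNReal.mul_lt_top ENNReal.ofReal_lt_top ?_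
    refine lt_of_le_of_lt (aux_shifted d hd x R hR D hDR) ?_
    refine ENNReal.mul_lt_top (ENNReal.mul_lt_top ENNReal.ofReal_lt_top (ENNReal.pow_lt_top (n := d) ENNReal.ofNat_lt_top)) ?_
    exact measure_ball_lt_top

theorem convolution_force_regularization_difference
    (d : ℕ) (hd : 2 ≤ d)
    (Cstar : ℝ)
    (hCstar : Cstar = Real.Gamma ((d : ℝ) / 2) / (2 * π ^ ((d : ℝ) / 2)))
    (F : EuclideanSpace ℝ (Fin d) → EuclideanSpace ℝ (Fin d))
    (hF : ∀ x, F x = (-(Cstar / ‖x‖ ^ d)) • x)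
    (D : Set (EuclideanSpace ℝ (Fin d)))
    (hDb : Bornology.IsBounded D) (hDm : MeasurableSet D) :
    ∃ C : ℝ, 0 < C ∧
      ∀ (ε ε' : ℝ), 0 ≤ ε' → ε' ≤ ε →
      ∀ (Fε Fε' : EuclideanSpace ℝ (Fin d) → EuclideanSpace ℝ (Fin d)),
        Measurable Fε → Measurable Fε' →
        (∀ x, x ≠ 0 → ‖Fε x‖ ≤ Cstar / ‖x‖ ^ (d - 1)) →
        (∀ x, x ≠ 0 → ‖Fε' x‖ ≤ Cstar / ‖x‖ ^ (d - 1)) →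
        (∀ x, ε ≤ ‖x‖ → Fε x = F x) →
        (∀ x, ε' ≤ ‖x‖ → Fε' x = F x) →
        ∀ (ρ : EuclideanSpace ℝ (Fin d) → ℝ) (M : ℝ),
          Measurable ρ → (∀ x, 0 ≤ ρ x) → (∀ x ∈ D, ρ x ≤ M) →
          ∀ x ∈ D,
            ‖(∫ y in D, ρ y • Fε (x - y)) - ∫ y in D, ρ y • Fε' (x - y)‖
              ≤ C * ε * M := by
  have hd1 : 1 ≤ d := le_trans (by norm_num) hd
  haveI : Nonempty (Fin d) := ⟨⟨0, hd1⟩⟩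
  set V : ℝ≥0∞ := volume (Metric.ball (0 : EuclideanSpace ℝ (Fin d)) 1) with hVdef
  have hVpos : 0 < V := Metric.measure_ball_pos _ _ one_pos
  have hVlt : V < ⊤ := measure_ball_lt_top
  have hVt_pos : 0 < V.toReal := ENNReal.toReal_pos hVpos.ne' hVlt.ne
  have hCpos : 0 < Cstar := by
    rw [hCstar]
    apply div_pos
    · exact Real.Gamma_pos_of_pos (by positivity)
    · positivity
  refine ⟨2 * Cstar * 2 ^ d * V.toReal, by positivity, ?_⟩
  intro ε ε' hε' hε'ε Fε Fε' hmFε hmFε' hFεb hFε'b hFεeq hFε'eq ρ M hρm hρ0 hρM x hx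
  have hε0 : 0 ≤ ε := le_trans hε' hε'ε
  have hM0 : 0 ≤ M := le_trans (hρ0 x) (hρM x hx)
  obtain ⟨R, hDR⟩ := hDb.subset_ball x
  have hR0 : 0 ≤ R := by
    have := Metric.mem_ball.1 (hDR hx)
    rw [dist_self] at this
    exact this.le
  have hIε : IntegrableOn (fun y => ρ y • Fε (x - y)) D volume :=
    aux_integrableOn d hd1 Cstar hCpos.le Fε hmFε hFεb D hDm x R hR0 hDR ρ hρm hρ0 M hM0 hρM
  have hIε' : IntegrableOn (fun y => ρ y • Fε' (x - y)) D volume :=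
    aux_integrableOn d hd1 Cstar hCpos.le Fε' hmFε' hFε'b D hDm x R hR0 hDR ρ hρm hρ0 M hM0 hρM
  rw [← integral_sub hIε hIε']
  refine le_trans (norm_integral_le_lintegral_norm _) ?_
  refine ENNReal.toReal_le_of_le_ofReal (by positivity) ?_
  set K : ℝ := 2 * Cstar * M with hK
  have hK0 : 0 ≤ K := by positivity
  have h1 : ∀ᵐ y ∂(volume.restrict D), y ∈ D := ae_restrict_mem hDm
  have h2 : ∀ᵐ y ∂(volume.restrict D), y ≠ x := by
    refine ae_restrict_of_ae ?_
    rw [ae_iff]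
    simp only [ne_eq, not_not, Set.setOf_eq_eq_singleton]
    exact measure_singleton x
  have hmono : ∫⁻ y in D, ENNReal.ofReal ‖ρ y • Fε (x - y) - ρ y • Fε' (x - y)‖ ≤
      ∫⁻ y in D, (Metric.ball x ε).indicator
        (fun y => ENNReal.ofReal (K * (1 / ‖x - y‖ ^ (d - 1)))) y := by
    refine lintegral_mono_ae ?_
    filter_upwards [h1, h2] with y hy1 hy2
    by_cases hyb : y ∈ Metric.ball x ε
    · rw [Set.indicator_of_mem hyb]
      apply ENNReal.ofReal_le_ofReal
      have hxy : x - y ≠ 0 := sub_ne_zero.mpr (Ne.symm hy2)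
      calc ‖ρ y • Fε (x - y) - ρ y • Fε' (x - y)‖
          = ‖ρ y • (Fε (x - y) - Fε' (x - y))‖ := by rw [smul_sub]
        _ = ρ y * ‖Fε (x - y) - Fε' (x - y)‖ := by
            rw [norm_smul, Real.norm_eq_abs, abs_of_nonneg (hρ0 y)]
        _ ≤ M * (2 * Cstar * (1 / ‖x - y‖ ^ (d - 1))) := by
            refine mul_le_mul (hρM y hy1) ?_ (norm_nonneg _) hM0
            calc ‖Fε (x - y) - Fε' (x - y)‖ ≤ ‖Fε (x - y)‖ + ‖Fε' (x - y)‖ := norm_sub_le _ _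
              _ ≤ Cstar / ‖x - y‖ ^ (d - 1) + Cstar / ‖x - y‖ ^ (d - 1) :=
                  add_le_add (hFεb _ hxy) (hFε'b _ hxy)
              _ = 2 * Cstar * (1 / ‖x - y‖ ^ (d - 1)) := by ring
        _ = K * (1 / ‖x - y‖ ^ (d - 1)) := by rw [hK]; ring
    · rw [Set.indicator_of_notMem hyb]
      have hd2 : ε ≤ ‖x - y‖ := by
        rw [Metric.mem_ball, not_lt, dist_eq_norm, ← norm_sub_rev] at hyb
        exact hyb
      rw [hFεeq _ hd2, hFε'eq _ (le_trans hε'ε hd2)]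
      simp
  refine le_trans hmono ?_
  have hstep : ∫⁻ y in D, (Metric.ball x ε).indicator
        (fun y => ENNReal.ofReal (K * (1 / ‖x - y‖ ^ (d - 1)))) y ≤
      ∫⁻ y in Metric.ball x ε, ENNReal.ofReal (K * (1 / ‖x - y‖ ^ (d - 1))) := by
    refine le_trans (setLIntegral_le_lintegral _ _) ?_
    rw [lintegral_indicator measurableSet_ball]
  refine le_trans hstep ?_
  have heq : ∫⁻ y in Metric.ball x ε, ENNReal.ofReal (K * (1 / ‖x - y‖ ^ (d - 1))) =
      ENNReal.ofReal K * ∫⁻ y in Metric.ball x ε, ENNReal.ofReal (1 / ‖x - y‖ ^ (d - 1)) := by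
    rw [← lintegral_const_mul' _ _ ENNReal.ofReal_ne_top]
    refine lintegral_congr fun y => ?_
    rw [← ENNReal.ofReal_mul hK0]
  rw [heq]
  calc ENNReal.ofReal K * ∫⁻ y in Metric.ball x ε, ENNReal.ofReal (1 / ‖x - y‖ ^ (d - 1))
      ≤ ENNReal.ofReal K * (ENNReal.ofReal ε * 2 ^ d * V) := by
        gcongr
        exact aux_shifted d hd1 x ε hε0 _ (subset_refl _)
    _ = ENNReal.ofReal (2 * Cstar * 2 ^ d * V.toReal * ε * M) := by
        have n1 : (0:ℝ) ≤ 2 * Cstar := by linarith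
        have n2 : (0:ℝ) ≤ 2 * Cstar * 2 ^ d := mul_nonneg n1 (by positivity)
        have n3 : (0:ℝ) ≤ 2 * Cstar * 2 ^ d * V.toReal := mul_nonneg n2 ENNReal.toReal_nonneg
        have n4 : (0:ℝ) ≤ 2 * Cstar * 2 ^ d * V.toReal * ε := mul_nonneg n3 hε0
        rw [hK, ENNReal.ofReal_mul n4, ENNReal.ofReal_mul n3, ENNReal.ofReal_mul n2,
          ENNReal.ofReal_mul n1, ENNReal.ofReal_mul n1,
          ENNReal.ofReal_mul (by norm_num : (0:ℝ) ≤ 2),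
          ENNReal.ofReal_pow (by norm_num : (0:ℝ) ≤ 2), ENNReal.ofReal_toReal hVlt.ne,
          ENNReal.ofReal_ofNat]
        ring
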